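/- Let x, y be dyadic points in Q = {x ∈ ℝ^d : ‖x‖_∞ ≤ 1} and let m be the smallest nonnegative integer with ‖x−y‖_∞ < 2^{−m}. Then there exist finite sequences (x_r)_{r≥m}, (y_r)_{r≥m} with 2^r x_r, 2^r y_r ∈ ℤ^d, x_r = x and y_r = y for all large r, such that ‖x_m − y_m‖_∞ ∈ {0, 2^{−m}} and ‖x_r − x_{r+1}‖_∞ ∈ {0, 2^{−r−1}}, ‖y_r − y_{r+1}‖_∞ ∈ {0, 2^{−r−1}} for all r ≥ m; i.e., each consecutive pair consists of equal points or dyadic neighbours. -/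

import Mathlib

noncomputable section

def IsDyadicPt {d : ℕ} (x : Fin d → ℝ) : Prop :=
  ∀ i, ∃ (a : ℤ) (m : ℕ), x i = (a : ℝ) / 2 ^ m

lemma norm_pair {d : ℕ} (f : Fin d → ℝ) {c : ℝ} (hc : 0 ≤ c)
    (h : ∀ i, |f i| = 0 ∨ |f i| = c) : ‖f‖ = 0 ∨ ‖f‖ = c := by
  by_cases he : ∃ i, |f i| = c
  · obtain ⟨i, hi⟩ := he
    right
    apply le_antisymm
    · rw [pi_norm_le_iff_of_nonneg hc]
      intro j
      rcases h j with h0 | h1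
      · rw [Real.norm_eq_abs, h0]; exact hc
      · rw [Real.norm_eq_abs, h1]
    · calc c = ‖f i‖ := by rw [Real.norm_eq_abs, hi]
        _ ≤ ‖f‖ := norm_le_pi_norm f i
  · left
    have : f = 0 := by
      funext i
      rcases h i with h0 | h1
      · exact abs_eq_zero.mp h0
      · exact absurd ⟨i, h1⟩ he
    simp [this]

lemma floor_double (a : ℝ) : ⌊2 * a⌋ = 2 * ⌊a⌋ ∨ ⌊2 * a⌋ = 2 * ⌊a⌋ + 1 := by
  have h1 : (2 * ⌊a⌋ : ℤ) ≤ ⌊2 * a⌋ := by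
    apply Int.le_floor.mpr
    push_cast
    linarith [Int.floor_le a]
  have h2 : ⌊2 * a⌋ < 2 * ⌊a⌋ + 2 := by
    apply Int.floor_lt.mpr
    push_cast
    linarith [Int.lt_floor_add_one a]
  omega

/-- the dyadic chaining construction. Given dyadic `x, y` in the unit
sup-norm ball `Q` and `m` the smallest nonnegative integer with `‖x - y‖_∞ < 2^{-m}`,
there are chains `(X_r)_{r ≥ m}`, `(Y_r)_{r ≥ m}` with `2^r X_r, 2^r Y_r ∈ ℤ^d`,
eventually equal to `x` resp. `y`, such that `X_m, Y_m` and each consecutive pair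
`X_r, X_{r+1}` (resp. `Y_r, Y_{r+1}`) are equal or dyadic neighbours. -/
theorem dyadic_chaining {d : ℕ} (x y : Fin d → ℝ)
    (hxQ : ∀ i, |x i| ≤ 1) (hyQ : ∀ i, |y i| ≤ 1)
    (hxd : IsDyadicPt x) (hyd : IsDyadicPt y)
    (m : ℕ) (hm : ‖x - y‖ < ((2 : ℝ) ^ m)⁻¹)
    (hmin : ∀ m' : ℕ, ‖x - y‖ < ((2 : ℝ) ^ m')⁻¹ → m ≤ m') :
    ∃ X Y : ℕ → (Fin d → ℝ),
      (∀ r : ℕ, m ≤ r → ∀ i, ∃ a : ℤ, X r i = (a : ℝ) / 2 ^ r) ∧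
      (∀ r : ℕ, m ≤ r → ∀ i, ∃ a : ℤ, Y r i = (a : ℝ) / 2 ^ r) ∧
      (∃ R : ℕ, ∀ r : ℕ, R ≤ r → X r = x ∧ Y r = y) ∧
      (‖X m - Y m‖ = 0 ∨ ‖X m - Y m‖ = ((2 : ℝ) ^ m)⁻¹) ∧
      (∀ r : ℕ, m ≤ r →
        (‖X r - X (r + 1)‖ = 0 ∨ ‖X r - X (r + 1)‖ = ((2 : ℝ) ^ (r + 1))⁻¹) ∧
        (‖Y r - Y (r + 1)‖ = 0 ∨ ‖Y r - Y (r + 1)‖ = ((2 : ℝ) ^ (r + 1))⁻¹)) := by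
  classical
  set X : ℕ → Fin d → ℝ := fun r i => (⌊(2:ℝ)^r * x i⌋ : ℝ) / 2^r with hX
  set Y : ℕ → Fin d → ℝ := fun r i => (⌊(2:ℝ)^r * y i⌋ : ℝ) / 2^r with hY
  refine ⟨X, Y, ?_, ?_, ?_, ?_, ?_⟩
  · intro r _ i; exact ⟨⌊(2:ℝ)^r * x i⌋, rfl⟩
  · intro r _ i; exact ⟨⌊(2:ℝ)^r * y i⌋, rfl⟩
  · -- eventually equal
    have key : ∀ z : Fin d → ℝ, IsDyadicPt z → ∃ N : ℕ, ∀ r : ℕ, N ≤ r →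
        (fun i => (⌊(2:ℝ)^r * z i⌋ : ℝ) / 2^r) = z := by
      intro z hz
      choose a n hn using hz
      refine ⟨Finset.univ.sup n, fun r hr => funext fun i => ?_⟩
      have hni : n i ≤ r := le_trans (Finset.le_sup (Finset.mem_univ i)) hr
      have hp : (2:ℝ)^r = 2^(r - n i) * 2^(n i) := by
        rw [← pow_add]; congr 1; omega
      have h2 : (2:ℝ)^r * z i = ((a i * 2^(r - n i) : ℤ) : ℝ) := by
        rw [hn i, hp]
        push_cast
        field_simp
      rw [h2, Int.floor_intCast, ← h2, mul_comm, mul_div_assoc,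
        div_self (by positivity : ((2:ℝ)^r) ≠ 0), mul_one]
    obtain ⟨N1, h1⟩ := key x hxd
    obtain ⟨N2, h2⟩ := key y hyd
    exact ⟨max N1 N2, fun r hr => ⟨h1 r (le_trans (le_max_left _ _) hr),
      h2 r (le_trans (le_max_right _ _) hr)⟩⟩
  · -- ‖X m - Y m‖
    apply norm_pair _ (by positivity)
    intro i
    have hxy : |x i - y i| < ((2:ℝ)^m)⁻¹ := by
      calc |x i - y i| = ‖(x - y) i‖ := by simp [Real.norm_eq_abs]
        _ ≤ ‖x - y‖ := norm_le_pi_norm _ i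
        _ < _ := hm
    set A := ⌊(2:ℝ)^m * x i⌋ with hA
    set B := ⌊(2:ℝ)^m * y i⌋ with hB
    have hd : |(2:ℝ)^m * x i - (2:ℝ)^m * y i| < 1 := by
      rw [← mul_sub, abs_mul, abs_of_pos (by positivity : (0:ℝ) < 2^m)]
      calc (2:ℝ)^m * |x i - y i| < (2:ℝ)^m * ((2:ℝ)^m)⁻¹ :=
            mul_lt_mul_of_pos_left hxy (by positivity)
        _ = 1 := mul_inv_cancel₀ (by positivity)
    have hfl : A - B = 0 ∨ A - B = 1 ∨ A - B = -1 := by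
      have a1 : A ≤ B + 1 := by
        have hb : (2:ℝ)^m * x i < (2:ℝ)^m * y i + 1 := by
          rcases abs_lt.mp hd with ⟨_, h⟩; linarith
        have := Int.floor_le_floor (le_of_lt hb)
        rwa [show ((2:ℝ)^m * y i + 1) = ((2:ℝ)^m * y i) + ((1:ℤ):ℝ) by norm_num,
          Int.floor_add_intCast] at this
      have a2 : B ≤ A + 1 := by
        have hb : (2:ℝ)^m * y i < (2:ℝ)^m * x i + 1 := by
          rcases abs_lt.mp hd with ⟨h, _⟩; linarith
        have := Int.floor_le_floor (le_of_lt hb)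
        rwa [show ((2:ℝ)^m * x i + 1) = ((2:ℝ)^m * x i) + ((1:ℤ):ℝ) by norm_num,
          Int.floor_add_intCast] at this
      omega
    have hXYi : (X m - Y m) i = ((A - B : ℤ) : ℝ) / 2^m := by
      simp only [hX, hY, Pi.sub_apply]
      push_cast
      ring
    rcases hfl with h0 | h1 | h1
    · left; rw [hXYi, h0]; simp
    · right; rw [hXYi, h1]
      rw [show (((1:ℤ)):ℝ) / 2^m = ((2:ℝ)^m)⁻¹ by push_cast; field_simp]
      rw [abs_of_pos (by positivity)]
    · right; rw [hXYi, h1]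
      rw [show (((-1:ℤ)):ℝ) / 2^m = -(((2:ℝ)^m)⁻¹) by push_cast; field_simp]
      rw [abs_neg, abs_of_pos (by positivity)]
  · -- consecutive steps
    have step : ∀ (z : Fin d → ℝ) (r : ℕ),
        ‖(fun i => (⌊(2:ℝ)^r * z i⌋ : ℝ) / 2^r) - (fun i => (⌊(2:ℝ)^(r+1) * z i⌋ : ℝ) / 2^(r+1))‖ = 0 ∨
        ‖(fun i => (⌊(2:ℝ)^r * z i⌋ : ℝ) / 2^r) - (fun i => (⌊(2:ℝ)^(r+1) * z i⌋ : ℝ) / 2^(r+1))‖ = ((2:ℝ)^(r+1))⁻¹ := by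
      intro z r
      apply norm_pair _ (by positivity)
      intro i
      have hdb : (2:ℝ)^(r+1) * z i = 2 * ((2:ℝ)^r * z i) := by ring
      rcases floor_double ((2:ℝ)^r * z i) with h | h
      · left
        rw [abs_eq_zero]
        simp only [Pi.sub_apply]
        rw [hdb, h]
        push_cast
        rw [pow_succ]
        field_simp
        ring
      · right
        simp only [Pi.sub_apply]
        rw [hdb, h]
        push_cast
        rw [show ((⌊(2:ℝ)^r * z i⌋ : ℝ)) / 2^r - (2 * ⌊(2:ℝ)^r * z i⌋ + 1) / 2^(r+1)
            = -(((2:ℝ)^(r+1))⁻¹) by rw [pow_succ]; field_simp; ring]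
        rw [abs_neg, abs_of_pos (by positivity)]
    intro r _
    exact ⟨step x r, step y r⟩
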